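/- arXiv:1701.07564 — 2 statements merged into one kernel-verified Lean document; each statement's English description precedes it below -/
import Mathlib

section
/- Let k be a field, m ≥ 1, and let A = k⟨a,b⟩/(a², b², (ab)^m − (ba)^m, (ab)^m a, (ba)^m b). Then A is a symmetric k-algebra: there exists a k-linear map λ : A → k whose associated bilinear form (x,y) ↦ λ(xy) is nondegenerate and symmetric. -/
open FreeAlgebra

/-- Relations of the torus-loop algebra `k⟨a,b⟩/(a², b², (ab)^m − (ba)^m, (ab)^m a, (ba)^m b)`,
where `a = ι k 0` and `b = ι k 1`. -/
inductive TorusRel (k : Type*) [Field k] (m : ℕ) :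
    FreeAlgebra k (Fin 2) → FreeAlgebra k (Fin 2) → Prop
  | asq : TorusRel k m (ι k 0 * ι k 0) 0
  | bsq : TorusRel k m (ι k 1 * ι k 1) 0
  | comm : TorusRel k m ((ι k 0 * ι k 1) ^ m) ((ι k 1 * ι k 0) ^ m)
  | soca : TorusRel k m ((ι k 0 * ι k 1) ^ m * ι k 0) 0
  | socb : TorusRel k m ((ι k 1 * ι k 0) ^ m * ι k 1) 0



namespace TorusAux

open Fin.NatCast

/-- Alternating word of length `n` starting with letter `s`. -/
def alt : ℕ → Fin 2 → List (Fin 2)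
  | 0, _ => []
  | n+1, s => s :: alt n (s+1)

@[simp] lemma alt_zero (s : Fin 2) : alt 0 s = [] := rfl
@[simp] lemma alt_succ (n : ℕ) (s : Fin 2) : alt (n+1) s = s :: alt n (s+1) := rfl

@[simp] lemma alt_length (n : ℕ) (s : Fin 2) : (alt n s).length = n := by
  induction n generalizing s with
  | zero => rfl
  | succ n ih => simp [ih]

lemma alt_append (p q : ℕ) (s : Fin 2) : alt (p+q) s = alt p s ++ alt q (s + (p : Fin 2)) := by
  induction p generalizing s with
  | zero => simp
  | succ p ih =>
      have : p + 1 + q = (p + q) + 1 := by omega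
      rw [this]
      simp only [alt_succ, ih (s+1), List.cons_append]
      congr 2
      push_cast
      congr 1
      ext; simp [Fin.val_add, Fin.val_natCast]; omega

lemma alt_head (n : ℕ) (s : Fin 2) (h : n ≠ 0) : (alt n s).headI = s := by
  cases n with
  | zero => exact absurd rfl h
  | succ n => rfl

lemma alt_chain (n : ℕ) (s : Fin 2) : (alt n s).Chain' (· ≠ ·) := by
  induction n generalizing s with
  | zero => simp [List.Chain']
  | succ n ih =>
      cases n with
      | zero => simp [List.Chain']
      | succ n =>
          rw [alt_succ, alt_succ]; apply List.isChain_cons_cons.mpr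
        
          refine ⟨?_, by rw [← alt_succ]; exact ih (s+1)⟩
          intro h
          have := congrArg (· - s) h
          simp at this
          
lemma chain_eq_alt : ∀ w : List (Fin 2), w.Chain' (· ≠ ·) → w = alt w.length w.headI := by
  intro w
  induction w with
  | nil => intro; rfl
  | cons a t ih =>
      intro h
      cases t with
      | nil => rfl
      | cons b t' =>
          replace h := List.isChain_cons_cons.mp h
          have hb : b = a + 1 := by
            have := h.1
            fin_cases a <;> fin_cases b <;> simp_all <;> rfl
          have := ih h.2
          simp only [List.length_cons, alt_succ, List.headI]
          rw [List.headI] at this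
          rw [this, hb]
          simp [alt_succ]

lemma not_chain_infix (u v : List (Fin 2)) (a : Fin 2) :
    ¬ (u ++ a :: a :: v).Chain' (· ≠ ·) := by
  induction u with
  | nil => intro h; rw [List.nil_append] at h; exact (List.isChain_cons_cons.mp h).1 rfl
  | cons x u ih =>
      intro h
      exact ih (h.tail)


def fw (k : Type*) [Field k] (w : List (Fin 2)) : FreeAlgebra k (Fin 2) :=
  (w.map (ι k)).prod

variable (k : Type*) [Field k]


@[simp] lemma fw_nil : fw k [] = 1 := rfl
@[simp] lemma fw_cons (a : Fin 2) (t : List (Fin 2)) : fw k (a :: t) = ι k a * fw k t := by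
  simp [fw]
lemma fw_append (u v : List (Fin 2)) : fw k (u ++ v) = fw k u * fw k v := by
  simp [fw]

lemma equiv_fw (w : List (Fin 2)) :
    (equivMonoidAlgebraFreeMonoid (R:=k) (X:=Fin 2)) (fw k w) =
      MonoidAlgebra.single (FreeMonoid.ofList w) 1 := by
  induction w with
  | nil => simp [MonoidAlgebra.one_def]
  | cons a t ih =>
      rw [fw_cons, map_mul, ih]
      have : (equivMonoidAlgebraFreeMonoid (R:=k) (X:=Fin 2)) (ι k a)
          = MonoidAlgebra.single (FreeMonoid.of a) 1 := by
        simp [equivMonoidAlgebraFreeMonoid]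
      rw [this, MonoidAlgebra.single_mul_single]
      simp

variable (k : Type*) [Field k]

def chi (m : ℕ) (w : List (Fin 2)) : k :=
  (if w = alt (2*m) 0 then (1:k) else 0) + (if w = alt (2*m) 1 then (1:k) else 0)

noncomputable def lam (m : ℕ) : FreeAlgebra k (Fin 2) →ₗ[k] k where
  toFun x := ((equivMonoidAlgebraFreeMonoid (R:=k) (X:=Fin 2)) x).coeff
      (FreeMonoid.ofList (alt (2*m) 0))
    + ((equivMonoidAlgebraFreeMonoid (R:=k) (X:=Fin 2)) x).coeff
      (FreeMonoid.ofList (alt (2*m) 1))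
  map_add' x y := by simp only [map_add, MonoidAlgebra.coeff_add]; erw [Finsupp.add_apply, Finsupp.add_apply]; ring
  map_smul' c x := by simp only [map_smul, MonoidAlgebra.coeff_smul, RingHom.id_apply]; erw [Finsupp.smul_apply, Finsupp.smul_apply]; simp only [smul_eq_mul]; ring

lemma lam_fw (m : ℕ) (w : List (Fin 2)) : lam k m (fw k w) = chi k m w := by
  classical
  have hinj : Function.Injective (FreeMonoid.ofList (α := Fin 2)) := Equiv.injective _
  show ((equivMonoidAlgebraFreeMonoid (R:=k) (X:=Fin 2)) (fw k w)).coeff _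
    + ((equivMonoidAlgebraFreeMonoid (R:=k) (X:=Fin 2)) (fw k w)).coeff _ = _
  rw [equiv_fw]
  rw [MonoidAlgebra.coeff_single, Finsupp.single_apply, Finsupp.single_apply]
  simp [chi, hinj.eq_iff]

lemma chi_ne (m : ℕ) (hm : 1 ≤ m) : alt (2*m) 0 ≠ alt (2*m) (1 : Fin 2) := by
  intro h
  have h1 : (2*m) ≠ 0 := by omega
  have := congrArg List.headI h
  rw [alt_head _ _ h1, alt_head _ _ h1] at this
  exact absurd this (by decide)

lemma chi_len (m : ℕ) (w : List (Fin 2)) (h : w.length ≠ 2*m) : chi k m w = 0 := by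
  have h0 : w ≠ alt (2*m) 0 := fun hw => h (by rw [hw, alt_length])
  have h1 : w ≠ alt (2*m) 1 := fun hw => h (by rw [hw, alt_length])
  simp [chi, h0, h1]

lemma chi_chain (m : ℕ) (w : List (Fin 2)) (h : ¬ w.Chain' (· ≠ ·)) : chi k m w = 0 := by
  have h0 : w ≠ alt (2*m) 0 := fun hw => h (hw ▸ alt_chain _ _)
  have h1 : w ≠ alt (2*m) 1 := fun hw => h (hw ▸ alt_chain _ _)
  simp [chi, h0, h1]

lemma chi_mem (m : ℕ) (hm : 1 ≤ m) (w : List (Fin 2)) :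
    chi k m w = if w = alt (2*m) 0 ∨ w = alt (2*m) 1 then 1 else 0 := by
  rcases eq_or_ne w (alt (2*m) 0) with h0 | h0
  · have h1 : w ≠ alt (2*m) 1 := h0 ▸ chi_ne m hm
    simp only [chi, h0, if_pos rfl, if_neg (chi_ne m hm), if_pos (Or.inl rfl), add_zero]
    simp
  · rcases eq_or_ne w (alt (2*m) 1) with h1 | h1
    · have h2 : ¬ (alt (2*m) 1 = alt (2*m) (0:Fin 2)) := fun hh => chi_ne m hm hh.symm
      simp [chi, h0, h1, h2]
    · simp [chi, h0, h1]

lemma cast_two_mul (m : ℕ) : ((2*m : ℕ) : Fin 2) = 0 := by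
  have : ((2*m : ℕ) : Fin 2) = (2 : Fin 2) * (m : ℕ) := by
    ext; simp only [Fin.val_mul, Fin.val_natCast]; simp
  rw [this]
  simp [show (2 : Fin 2) = 0 from rfl]

lemma rot_mem (m : ℕ) (u v : List (Fin 2))
    (h : u ++ v = alt (2*m) 0 ∨ u ++ v = alt (2*m) 1) :
    v ++ u = alt (2*m) 0 ∨ v ++ u = alt (2*m) 1 := by
  obtain ⟨σ, hσ⟩ : ∃ σ : Fin 2, u ++ v = alt (2*m) σ := by
    rcases h with h | h
    exacts [⟨0, h⟩, ⟨1, h⟩]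
  have hlen : u.length + v.length = 2*m := by
    have := congrArg List.length hσ
    simpa using this
  have hdec : alt (2*m) σ = alt u.length σ ++ alt v.length (σ + (u.length : Fin 2)) := by
    rw [← alt_append, hlen]
  rw [hdec] at hσ
  have hlen2 : u.length = (alt u.length σ).length := by rw [alt_length]
  obtain ⟨hu, hv⟩ := List.append_inj hσ hlen2
  have hvu : v ++ u = alt (2*m) (σ + (u.length : Fin 2)) := by
    have hdec2 : alt (2*m) (σ + (u.length : Fin 2))
        = alt v.length (σ + (u.length : Fin 2)) ++ alt u.length (σ + (u.length : Fin 2) + (v.length : Fin 2)) := by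
      rw [← alt_append]
      congr 1
      omega
    have key : alt u.length (σ + (u.length : Fin 2) + (v.length : Fin 2)) = alt u.length σ := by
      congr 1
      have hc : ((u.length : Fin 2) + (v.length : Fin 2)) = ((u.length + v.length : ℕ) : Fin 2) := by
        push_cast; ring
      rw [add_assoc, hc, hlen, cast_two_mul, add_zero]
    rw [hdec2, key, ← hv, ← hu]
  obtain ⟨tv, hvu2⟩ : ∃ t : Fin 2, v ++ u = alt (2*m) t := ⟨_, hvu⟩
  fin_cases tv
  · exact Or.inl hvu2
  · exact Or.inr hvu2

lemma chi_rot (m : ℕ) (hm : 1 ≤ m) (u v : List (Fin 2)) :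
    chi k m (u ++ v) = chi k m (v ++ u) := by
  rw [chi_mem k m hm, chi_mem k m hm]
  by_cases h : u ++ v = alt (2*m) 0 ∨ u ++ v = alt (2*m) 1
  · rw [if_pos h, if_pos (rot_mem m u v h)]
  · rw [if_neg h, if_neg (fun h' => h (rot_mem m v u h'))]

lemma fw_alt_two (mm : ℕ) (s : Fin 2) :
    fw k (alt (2*mm) s) = (ι k s * ι k (s+1))^mm := by
  induction mm with
  | zero => simp
  | succ n ih =>
      have h2 : 2*(n+1) = (2*n)+1+1 := by omega
      rw [h2]
      simp only [alt_succ]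
      have hss : s + 1 + 1 = s := by fin_cases s <;> decide
      rw [hss, fw_cons, fw_cons, ih, pow_succ', ← mul_assoc]

lemma span_fw_top : Submodule.span k (Set.range (fw k)) = ⊤ := by
  rw [eq_top_iff]
  rintro x -
  induction x using FreeAlgebra.induction with
  | grade0 r =>
      have : algebraMap k (FreeAlgebra k (Fin 2)) r = r • fw k [] := by
        simp [Algebra.algebraMap_eq_smul_one]
      rw [this]
      exact Submodule.smul_mem _ _ (Submodule.subset_span ⟨[], rfl⟩)
  | grade1 x =>
      have : ι k x = fw k [x] := by simp
      rw [this]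
      exact Submodule.subset_span ⟨[x], rfl⟩
  | mul a b ha hb =>
      induction ha using Submodule.span_induction with
      | mem a' ha' =>
          obtain ⟨u, rfl⟩ := ha'
          induction hb using Submodule.span_induction with
          | mem b' hb' =>
              obtain ⟨v, rfl⟩ := hb'
              rw [← fw_append]
              exact Submodule.subset_span ⟨u ++ v, rfl⟩
          | zero => rw [mul_zero]; exact Submodule.zero_mem _
          | add x y _ _ hx hy => rw [mul_add]; exact Submodule.add_mem _ hx hy
          | smul c x _ hx => rw [mul_smul_comm]; exact Submodule.smul_mem _ _ hx
      | zero => rw [zero_mul]; exact Submodule.zero_mem _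
      | add x y _ _ hx hy => rw [add_mul]; exact Submodule.add_mem _ hx hy
      | smul c x _ hx => rw [smul_mul_assoc]; exact Submodule.smul_mem _ _ hx
  | add a b ha hb => exact Submodule.add_mem _ ha hb

lemma key_words (m : ℕ) (hm : 1 ≤ m) {x y : FreeAlgebra k (Fin 2)}
    (h : TorusRel k m x y) (u v : List (Fin 2)) :
    lam k m (fw k u * x * fw k v) = lam k m (fw k u * y * fw k v) := by
  have hfw2 : ∀ s : Fin 2, ι k s * ι k s = fw k [s, s] := by intro s; simp [mul_assoc]
  have hpow : ∀ s : Fin 2, (ι k s * ι k (s+1))^m = fw k (alt (2*m) s) := by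
    intro s; rw [fw_alt_two]
  cases h with
  | asq =>
      rw [mul_zero, zero_mul, map_zero, hfw2 0, ← fw_append, ← fw_append, lam_fw]
      exact chi_chain k m _ (by rw [List.append_assoc]; exact not_chain_infix _ _ _)
  | bsq =>
      rw [mul_zero, zero_mul, map_zero, hfw2 1, ← fw_append, ← fw_append, lam_fw]
      exact chi_chain k m _ (by rw [List.append_assoc]; exact not_chain_infix _ _ _)
  | comm =>
      have h0 : (ι k 0 * ι k 1)^m = fw k (alt (2*m) 0) := by
        have := hpow 0; norm_num at this ⊢; exact this
      have h1 : (ι k 1 * ι k 0)^m = fw k (alt (2*m) 1) := by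
        have := hpow 1
        have e1 : (1 : Fin 2) + 1 = 0 := by decide
        rw [e1] at this; exact this
      rw [h0, h1, ← fw_append, ← fw_append, ← fw_append, ← fw_append, lam_fw, lam_fw]
      rcases eq_or_ne (u.length + v.length) 0 with hlen | hlen
      · have hu : u = [] := List.length_eq_zero_iff.mp (by omega)
        have hv : v = [] := List.length_eq_zero_iff.mp (by omega)
        subst hu; subst hv
        simp only [List.nil_append, List.append_nil]
        rw [chi_mem k m hm, chi_mem k m hm, if_pos (Or.inl rfl), if_pos (Or.inr rfl)]
      · rw [chi_len k m _ (by simp [alt_length]; omega), chi_len k m _ (by simp [alt_length]; omega)]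
  | soca =>
      rw [mul_zero, zero_mul, map_zero]
      have h0 : (ι k 0 * ι k 1)^m = fw k (alt (2*m) 0) := by
        have := hpow 0; norm_num at this ⊢; exact this
      have : ι k (0 : Fin 2) = fw k [0] := by simp
      rw [h0, this, ← fw_append, ← fw_append, ← fw_append, lam_fw]
      exact chi_len k m _ (by simp [alt_length]; omega)
  | socb =>
      rw [mul_zero, zero_mul, map_zero]
      have h1 : (ι k 1 * ι k 0)^m = fw k (alt (2*m) 1) := by
        have := hpow 1
        have e1 : (1 : Fin 2) + 1 = 0 := by decide
        rw [e1] at this; exact this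
      have : ι k (1 : Fin 2) = fw k [1] := by simp
      rw [h1, this, ← fw_append, ← fw_append, ← fw_append, lam_fw]
      exact chi_len k m _ (by simp [alt_length]; omega)

lemma key_free (m : ℕ) (hm : 1 ≤ m) {x y : FreeAlgebra k (Fin 2)}
    (h : TorusRel k m x y) (c d : FreeAlgebra k (Fin 2)) :
    lam k m (c * x * d) = lam k m (c * y * d) := by
  have hc : c ∈ Submodule.span k (Set.range (fw k)) := by rw [span_fw_top]; trivial
  induction hc using Submodule.span_induction generalizing d with
  | mem c' hc' =>
      obtain ⟨u, rfl⟩ := hc'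
      have hd : d ∈ Submodule.span k (Set.range (fw k)) := by rw [span_fw_top]; trivial
      induction hd using Submodule.span_induction with
      | mem d' hd' => obtain ⟨v, rfl⟩ := hd'; exact key_words k m hm h u v
      | zero => simp
      | add d1 d2 _ _ h1 h2 => rw [mul_add, mul_add, map_add, map_add, h1, h2]
      | smul a d' _ h1 => rw [mul_smul_comm, mul_smul_comm, map_smul, map_smul, h1]
  | zero => simp
  | add c1 c2 _ _ h1 h2 =>
      rw [add_mul, add_mul, add_mul, add_mul, map_add, map_add, h1, h2]
  | smul a c' _ h1 =>
      rw [smul_mul_assoc, smul_mul_assoc, smul_mul_assoc, smul_mul_assoc, map_smul, map_smul, h1]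

lemma rel_lam (m : ℕ) (hm : 1 ≤ m) {x y : FreeAlgebra k (Fin 2)}
    (h : RingQuot.Rel (TorusRel k m) x y) : lam k m x = lam k m y := by
  have main : ∀ {x y : FreeAlgebra k (Fin 2)}, RingQuot.Rel (TorusRel k m) x y →
      ∀ c d : FreeAlgebra k (Fin 2), lam k m (c * x * d) = lam k m (c * y * d) := by
    intro x y h
    induction h with
    | of hr => intro c d; exact key_free k m hm hr c d
    | add_left h2 ih =>
        intro c d
        rw [mul_add, add_mul, mul_add, add_mul, map_add, map_add, ih c d]
    | mul_left h2 ih =>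
        rename_i a b e
        intro c d
        simpa only [mul_assoc] using ih c (e * d)
    | mul_right h2 ih =>
        rename_i a b e
        intro c d
        simpa only [mul_assoc] using ih (c * a) d
  have := main h 1 1
  simpa using this

noncomputable def L (m : ℕ) (hm : 1 ≤ m) : RingQuot (TorusRel k m) →ₗ[k] k where
  toFun x := Quot.lift (fun a => lam k m a) (fun _ _ h => rel_lam k m hm h) x.toQuot
  map_add' := by
    rintro ⟨x⟩ ⟨y⟩
    induction x using Quot.ind with | _ a => ?_
    induction y using Quot.ind with | _ b => ?_
    rw [RingQuot.add_quot]
    exact map_add (lam k m) a b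
  map_smul' := by
    rintro c ⟨x⟩
    induction x using Quot.ind with | _ a => ?_
    rw [RingQuot.smul_quot]
    exact map_smul (lam k m) c a

lemma L_mk (m : ℕ) (hm : 1 ≤ m) (x : FreeAlgebra k (Fin 2)) :
    L k m hm (RingQuot.mkAlgHom k (TorusRel k m) x) = lam k m x := by
  have : RingQuot.mkAlgHom k (TorusRel k m) x = ⟨Quot.mk _ x⟩ := by
    rw [RingQuot.mkAlgHom_def]
    simp only [RingQuot.mkRingHom_def]
    rfl
  rw [this]
  rfl

noncomputable def e (m : ℕ) (w : List (Fin 2)) : RingQuot (TorusRel k m) :=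
  RingQuot.mkAlgHom k (TorusRel k m) (fw k w)

lemma e_mul (m : ℕ) (u v : List (Fin 2)) : e k m (u ++ v) = e k m u * e k m v := by
  rw [e, fw_append, map_mul]; rfl

lemma L_e (m : ℕ) (hm : 1 ≤ m) (w : List (Fin 2)) : L k m hm (e k m w) = chi k m w := by
  rw [e, L_mk, lam_fw]

lemma e_sq_zero (m : ℕ) (s : Fin 2) : e k m [s, s] = 0 := by
  have h : fw k [s, s] = ι k s * ι k s := by simp [mul_assoc]
  rw [e, h]
  have hz : RingQuot.mkAlgHom k (TorusRel k m) (ι k s * ι k s) =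
      RingQuot.mkAlgHom k (TorusRel k m) 0 := by
    fin_cases s
    · exact RingQuot.mkAlgHom_rel k TorusRel.asq
    · exact RingQuot.mkAlgHom_rel k TorusRel.bsq
  rw [hz, map_zero]

lemma e_comm (m : ℕ) : e k m (alt (2*m) 0) = e k m (alt (2*m) 1) := by
  rw [e, e, fw_alt_two, fw_alt_two]
  have e0 : (0 : Fin 2) + 1 = 1 := rfl
  have e1 : (1 : Fin 2) + 1 = 0 := by decide
  rw [e0, e1]
  exact RingQuot.mkAlgHom_rel k TorusRel.comm

lemma e_soc (m : ℕ) (s : Fin 2) : e k m (alt (2*m) s ++ [s]) = 0 := by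
  rw [e, fw_append, fw_alt_two]
  have hfs : fw k [s] = ι k s := by simp
  rw [hfs]
  have e0 : (0 : Fin 2) + 1 = 1 := rfl
  have e1 : (1 : Fin 2) + 1 = 0 := by decide
  have hs : s = 0 ∨ s = 1 := by fin_cases s; exacts [Or.inl rfl, Or.inr rfl]
  rcases hs with rfl | rfl
  · rw [e0]
    rw [RingQuot.mkAlgHom_rel k TorusRel.soca, map_zero]
  · rw [e1]
    rw [RingQuot.mkAlgHom_rel k TorusRel.socb, map_zero]

/-- The basis words: alternating words of length at most `2m`, excluding `alt (2m) 1`. -/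
noncomputable def BW (m : ℕ) : Finset (List (Fin 2)) :=
  (((Finset.range (2*m+1)) ×ˢ (Finset.univ : Finset (Fin 2))).image
    (fun p => alt p.1 p.2)).erase (alt (2*m) 1)

lemma mem_BW (m : ℕ) (l : ℕ) (s : Fin 2) (hl : l ≤ 2*m) (hne : alt l s ≠ alt (2*m) 1) :
    alt l s ∈ BW m := by
  refine Finset.mem_erase.mpr ⟨hne, ?_⟩
  exact Finset.mem_image.mpr ⟨(l, s), by simp [Finset.mem_product, Nat.lt_succ_iff, hl], rfl⟩

lemma BW_spec (m : ℕ) (w : List (Fin 2)) (hw : w ∈ BW m) :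
    ∃ l s, l ≤ 2*m ∧ w = alt l s ∧ w ≠ alt (2*m) 1 := by
  obtain ⟨hne, hmem⟩ := Finset.mem_erase.mp hw
  obtain ⟨⟨l, s⟩, hp, rfl⟩ := Finset.mem_image.mp hmem
  simp only [Finset.mem_product, Finset.mem_range, Nat.lt_succ_iff] at hp
  exact ⟨l, s, hp.1, rfl, hne⟩

lemma chain_or_infix : ∀ w : List (Fin 2),
    w.Chain' (· ≠ ·) ∨ ∃ u a v, w = u ++ a :: a :: v := by
  intro w
  induction w with
  | nil => exact Or.inl (by simp [List.Chain'])
  | cons x t ih =>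
      cases t with
      | nil => exact Or.inl (by simp [List.Chain'])
      | cons y t' =>
          rcases eq_or_ne x y with h | h
          · exact Or.inr ⟨[], x, t', by rw [h]; rfl⟩
          · rcases ih with hc | ⟨u, a, v, hw⟩
            · exact Or.inl (List.isChain_cons_cons.mpr ⟨h, hc⟩)
            · exact Or.inr ⟨x :: u, a, v, by rw [hw]; rfl⟩

lemma span_e (m : ℕ) (hm : 1 ≤ m) (w : List (Fin 2)) :
    e k m w ∈ Submodule.span k (e k m '' ↑(BW m)) := by
  rcases chain_or_infix w with hc | ⟨u, a, v, rfl⟩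
  · -- alternating word
    have hw : w = alt w.length w.headI := chain_eq_alt w hc
    rcases le_or_gt w.length (2*m) with hlen | hlen
    · rcases eq_or_ne w (alt (2*m) 1) with h1 | h1
      · rw [h1, ← e_comm]
        refine Submodule.subset_span ⟨alt (2*m) 0, ?_, rfl⟩
        exact mem_BW m (2*m) 0 le_rfl (chi_ne m hm)
      · refine Submodule.subset_span ⟨w, ?_, rfl⟩
        rw [hw] at h1 ⊢
        exact mem_BW m w.length w.headI hlen h1
    · -- too long: contains the socle killer as prefix
      have hdec : alt w.length w.headI
          = (alt (2*m) w.headI ++ [w.headI]) ++ alt (w.length - (2*m+1)) (w.headI + ((2*m+1 : ℕ) : Fin 2)) := by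
        have h1 : w.length = (2*m+1) + (w.length - (2*m+1)) := by omega
        have h2 : alt (2*m+1) w.headI = alt (2*m) w.headI ++ [w.headI] := by
          have h3 := alt_append (2*m) 1 w.headI
          rw [h3, cast_two_mul, add_zero]
          rfl
        rw [← h2, ← alt_append, ← h1]
      rw [hw, hdec, e_mul, e_soc, zero_mul]
      exact Submodule.zero_mem _
  · -- contains a square
    have : u ++ a :: a :: v = u ++ ([a, a] ++ v) := rfl
    rw [this, e_mul, e_mul, e_sq_zero, zero_mul, mul_zero]
    exact Submodule.zero_mem _

lemma span_top (m : ℕ) (hm : 1 ≤ m) (x : RingQuot (TorusRel k m)) :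
    x ∈ Submodule.span k (e k m '' ↑(BW m)) := by
  obtain ⟨y, rfl⟩ := RingQuot.mkAlgHom_surjective k (TorusRel k m) x
  have hy : y ∈ Submodule.span k (Set.range (fw k)) := by rw [span_fw_top]; trivial
  induction hy using Submodule.span_induction with
  | mem a ha => obtain ⟨u, rfl⟩ := ha; exact span_e k m hm u
  | zero => rw [map_zero]; exact Submodule.zero_mem _
  | add a b _ _ h1 h2 => rw [map_add]; exact Submodule.add_mem _ h1 h2
  | smul c a _ h1 => rw [map_smul]; exact Submodule.smul_mem _ _ h1

lemma lam_symm (m : ℕ) (hm : 1 ≤ m) (a b : FreeAlgebra k (Fin 2)) :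
    lam k m (a * b) = lam k m (b * a) := by
  have ha : a ∈ Submodule.span k (Set.range (fw k)) := by rw [span_fw_top]; trivial
  induction ha using Submodule.span_induction generalizing b with
  | mem a' ha' =>
      obtain ⟨u, rfl⟩ := ha'
      have hb : b ∈ Submodule.span k (Set.range (fw k)) := by rw [span_fw_top]; trivial
      induction hb using Submodule.span_induction with
      | mem b' hb' =>
          obtain ⟨v, rfl⟩ := hb'
          rw [← fw_append, ← fw_append, lam_fw, lam_fw]
          exact chi_rot k m hm u v
      | zero => simp
      | add x y _ _ h1 h2 => rw [mul_add, add_mul, map_add, map_add, h1, h2]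
      | smul cc x _ h1 => rw [mul_smul_comm, smul_mul_assoc, map_smul, map_smul, h1]
  | zero => simp
  | add x y _ _ h1 h2 => rw [add_mul, mul_add, map_add, map_add, h1 b, h2 b]
  | smul cc x _ h1 => rw [smul_mul_assoc, mul_smul_comm, map_smul, map_smul, h1 b]

lemma alt_head_inj (n : ℕ) (hn : 1 ≤ n) {a b : Fin 2} (h : alt n a = alt n b) : a = b := by
  have := congrArg List.headI h
  rwa [alt_head n a (by omega), alt_head n b (by omega)] at this

/-- The complementary word. -/
def comp (m : ℕ) (w : List (Fin 2)) : List (Fin 2) :=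
  alt (2*m - w.length) (w.headI + (w.length : Fin 2))

lemma comp_alt (m l : ℕ) (s : Fin 2) (hl : 1 ≤ l) :
    comp m (alt l s) = alt (2*m - l) (s + (l : Fin 2)) := by
  rw [comp, alt_length, alt_head l s (by omega)]

lemma comp_nil (m : ℕ) : comp m ([] : List (Fin 2)) = alt (2*m) 0 := by
  rw [comp]
  norm_num

lemma diag_mem (m l : ℕ) (s : Fin 2) (hl : l ≤ 2*m) (hl1 : 1 ≤ l) :
    alt l s ++ comp m (alt l s) = alt (2*m) s := by
  rw [comp_alt m l s hl1, ← alt_append]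
  congr 1
  omega

lemma chi_alt_full (m : ℕ) (hm : 1 ≤ m) (s : Fin 2) : chi k m (alt (2*m) s) = 1 := by
  have hs : s = 0 ∨ s = 1 := by fin_cases s; exacts [Or.inl rfl, Or.inr rfl]
  rw [chi_mem k m hm]
  rcases hs with rfl | rfl
  · rw [if_pos (Or.inl rfl)]
  · rw [if_pos (Or.inr rfl)]

lemma offdiag (m : ℕ) (hm : 1 ≤ m) (l l' : ℕ) (s s' σ : Fin 2)
    (hl : l ≤ 2*m) (hl' : l' ≤ 2*m)
    (hne : alt l s ≠ alt (2*m) 1) (hne' : alt l' s' ≠ alt (2*m) 1)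
    (heq : alt l s ≠ alt l' s')
    (habs : alt l s ++ comp m (alt l' s') = alt (2*m) σ) : False := by
  have hclen : (comp m (alt l' s')).length = 2*m - l' := by
    rw [comp, alt_length, alt_length]
  have hlen : l + (2*m - l') = 2*m := by
    have hh := congrArg List.length habs
    rw [List.length_append, alt_length, alt_length, hclen] at hh
    exact hh
  have hll' : l = l' := by omega
  subst hll'
  have hdec : alt (2*m) σ = alt l σ ++ alt (2*m - l) (σ + (l : Fin 2)) := by
    rw [← alt_append]; congr 1; omega
  rw [hdec] at habs
  have hlen2 : (alt l s).length = (alt l σ).length := by rw [alt_length, alt_length]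
  obtain ⟨h1, h2⟩ := List.append_inj habs hlen2
  rcases Nat.eq_zero_or_pos l with rfl | hlpos
  · exact heq rfl
  · have hsσ : s = σ := alt_head_inj l hlpos h1
    rcases lt_or_eq_of_le hl with hlt | hl2m
    · rw [comp_alt m l s' hlpos] at h2
      have hh2 : s' + (l : Fin 2) = σ + (l : Fin 2) :=
        alt_head_inj (2*m - l) (by omega) h2
      have hs' : s' = σ := add_right_cancel hh2
      exact heq (by rw [hsσ, hs'])
    · have hfin : ∀ t : Fin 2, t = 0 ∨ t = 1 := by decide
      have hs0 : s = 0 := by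
        rcases hfin s with rfl | rfl
        · rfl
        · exact absurd (by rw [hl2m]) hne
      have hs'0 : s' = 0 := by
        rcases hfin s' with rfl | rfl
        · rfl
        · exact absurd (by rw [hl2m]) hne'
      exact heq (by rw [hs0, hs'0])

lemma gram (m : ℕ) (hm : 1 ≤ m) (w w0 : List (Fin 2)) (hw : w ∈ BW m) (hw0 : w0 ∈ BW m) :
    chi k m (w ++ comp m w0) = if w = w0 then 1 else 0 := by
  obtain ⟨l, s, hl, hwe, hne⟩ := BW_spec m w hw
  obtain ⟨l', s', hl', hwe', hne'⟩ := BW_spec m w0 hw0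
  subst hwe; subst hwe'
  by_cases heq : alt l s = alt l' s'
  · rw [if_pos heq, ← heq]
    rcases Nat.eq_zero_or_pos l with rfl | hlpos
    · rw [alt_zero, List.nil_append, comp_nil]
      exact chi_alt_full k m hm 0
    · rw [diag_mem m l s hl hlpos]
      exact chi_alt_full k m hm s
  · rw [if_neg heq, chi_mem k m hm, if_neg ?_]
    rintro (habs | habs)
    · exact offdiag m hm l l' s s' 0 hl hl' hne hne' heq habs
    · exact offdiag m hm l l' s s' 1 hl hl' hne hne' heq habs

end TorusAux

/-- The torus-loop algebra is a symmetric `k`-algebra: there is a linear functional whose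
associated bilinear form `(x, y) ↦ l (x * y)` is symmetric and nondegenerate. -/
theorem stmt_1 (k : Type*) [Field k] (m : ℕ) (hm : 1 ≤ m) :
    ∃ l : RingQuot (TorusRel k m) →ₗ[k] k,
      (∀ x y, l (x * y) = l (y * x)) ∧
      (∀ x, (∀ y, l (x * y) = 0) → x = 0) := by
  refine ⟨TorusAux.L k m hm, fun x y => ?_, fun x hx => ?_⟩
  · obtain ⟨a, rfl⟩ := RingQuot.mkAlgHom_surjective k (TorusRel k m) x
    obtain ⟨b, rfl⟩ := RingQuot.mkAlgHom_surjective k (TorusRel k m) y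
    rw [← map_mul, ← map_mul, TorusAux.L_mk, TorusAux.L_mk]
    exact TorusAux.lam_symm k m hm a b
  · have hxs := TorusAux.span_top k m hm x
    rw [Finsupp.mem_span_image_iff_linearCombination] at hxs
    obtain ⟨c, hsupp, rfl⟩ := hxs
    have hsub : ↑c.support ⊆ (↑(TorusAux.BW m) : Set (List (Fin 2))) :=
      (Finsupp.mem_supported k c).mp hsupp
    have hzero : ∀ w0 ∈ TorusAux.BW m, c w0 = 0 := by
      intro w0 hw0
      have h := hx (TorusAux.e k m (TorusAux.comp m w0))
      rw [Finsupp.linearCombination_apply, Finsupp.sum, Finset.sum_mul, map_sum] at h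
      have hterm : ∀ w ∈ c.support,
          TorusAux.L k m hm (c w • TorusAux.e k m w * TorusAux.e k m (TorusAux.comp m w0))
          = if w = w0 then c w else 0 := by
        intro w hw
        rw [smul_mul_assoc, map_smul, ← TorusAux.e_mul, TorusAux.L_e,
          TorusAux.gram k m hm w w0 (hsub hw) hw0]
        simp [smul_eq_mul, mul_ite]
      rw [Finset.sum_congr rfl hterm, Finset.sum_ite_eq' c.support w0 (fun w => c w)] at h
      by_cases hmem : w0 ∈ c.support
      · rwa [if_pos hmem] at h
      · exact Finsupp.notMem_support_iff.mp hmem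
    rw [Finsupp.linearCombination_apply, Finsupp.sum]
    exact Finset.sum_eq_zero fun w hw => by rw [hzero w (hsub hw), zero_smul]
end

section
/- In a Brauer graph algebra B over a field k associated to a ribbon graph Γ with multiplicities m_v at vertices v, the dimension of B equals Σ_v m_v d_v², where d_v is the valency of v (each loop counted twice). Verify this for the Brauer graph with a single vertex v of multiplicity m and a single loop edge: the algebra k⟨a,b⟩/(a² ,b², (ab)^m − (ba)^m, (ab)^m a, (ba)^m b) has dimension 4m = m · 2². -/
open FreeAlgebra

namespace TorusAux

abbrev Idx := List (Fin 2) ⊕ Unit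

def lm (m : ℕ) (c : Fin 2) : Idx → Option Idx
  | .inl w =>
      if w.head? = some c then none
      else if w.length + 1 < 2 * m then some (.inl (c :: w))
      else if w.length + 1 = 2 * m then some (.inr ())
      else none
  | .inr _ => none

def tstep (m : ℕ) (c d : Fin 2) (o : Option Idx) : Option Idx :=
  (o.bind (lm m d)).bind (lm m c)

variable {m : ℕ} {c d : Fin 2}

@[simp] lemma tstep_none : tstep m c d none = none := rfl

@[simp] lemma tstep_socle : tstep m c d (some (.inr ())) = none := rfl

lemma iter_none (j : ℕ) : (tstep m c d)^[j] none = none :=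
  Function.iterate_fixed rfl j

lemma iter_socle (j : ℕ) : (tstep m c d)^[j + 1] (some (.inr ())) = none := by
  rw [Function.iterate_succ_apply, tstep_socle, iter_none]

lemma tstep_inl (hcd : c ≠ d) (w : List (Fin 2)) :
    tstep m c d (some (.inl w)) =
      if w.head? = some d then none
      else if w.length + 2 < 2 * m then some (.inl (c :: d :: w))
      else if w.length + 2 = 2 * m then some (.inr ())
      else none := by
  by_cases h1 : w.head? = some d
  · simp only [tstep, lm, Option.bind_some, if_pos h1, Option.bind_none, if_pos h1]
  · rw [if_neg h1]
    by_cases h2 : w.length + 1 < 2 * m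
    · simp only [tstep, lm, Option.bind_some, if_neg h1, if_pos h2]
      have hdc : ¬((d :: w).head? = some c) := by
        simpa using fun h => hcd h.symm
      simp only [lm, Option.bind_some, if_neg hdc, List.length_cons]
    · rw [if_neg (by omega), if_neg (by omega)]
      by_cases h3 : w.length + 1 = 2 * m
      · simp only [tstep, lm, Option.bind_some, if_neg h1, if_neg h2, if_pos h3]
      · simp only [tstep, lm, Option.bind_some, if_neg h1, if_neg h2, if_neg h3,
          Option.bind_none]

lemma iter_kill (hcd : c ≠ d) :
    ∀ (j : ℕ) (w : List (Fin 2)), 2 * m < w.length + 2 * (j + 1) →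
      (tstep m c d)^[j + 1] (some (.inl w)) = none := by
  intro j
  induction j with
  | zero =>
    intro w hw
    rw [Function.iterate_one, tstep_inl hcd]
    split_ifs <;> first | rfl | omega
  | succ j ih =>
    intro w hw
    rw [Function.iterate_succ_apply, tstep_inl hcd]
    split_ifs with h1 h2 h3
    · exact iter_none _
    · exact ih _ (by first | (simp; omega) | simp | omega)
    · exact iter_socle _
    · exact iter_none _

def altpre (c d : Fin 2) : ℕ → List (Fin 2)
  | 0 => []
  | j + 1 => c :: d :: altpre c d j

@[simp] lemma altpre_length (j : ℕ) : (altpre c d j).length = 2 * j := by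
  induction j with
  | zero => rfl
  | succ j ih => simp [altpre, ih]; omega

lemma iter_grow (hcd : c ≠ d) :
    ∀ (j : ℕ) (w : List (Fin 2)), w.head? ≠ some d → w.length + 2 * j < 2 * m →
      (tstep m c d)^[j] (some (.inl w)) = some (.inl (altpre c d j ++ w)) := by
  intro j
  induction j with
  | zero => intro w _ _; simp [altpre]
  | succ j ih =>
    intro w hw hlen
    rw [Function.iterate_succ_apply', ih w hw (by omega), tstep_inl hcd]
    have hhead : (altpre c d j ++ w).head? ≠ some d := by
      cases j with
      | zero => simpa [altpre] using hw
      | succ j => simp [altpre]; exact fun h => hcd h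
    rw [if_neg hhead]
    have : (altpre c d j ++ w).length + 2 < 2 * m := by simp; omega
    rw [if_pos this]
    rfl

lemma iter_exact (hcd : c ≠ d) (j : ℕ) (w : List (Fin 2))
    (hw : w.head? ≠ some d) (hlen : w.length + 2 * (j + 1) = 2 * m) :
    (tstep m c d)^[j + 1] (some (.inl w)) = some (.inr ()) := by
  rw [Function.iterate_succ_apply', iter_grow hcd j w hw (by omega), tstep_inl hcd]
  have hhead : (altpre c d j ++ w).head? ≠ some d := by
    cases j with
    | zero => simpa [altpre] using hw
    | succ j => simp [altpre]; exact fun h => hcd h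
  rw [if_neg hhead, if_neg (by first | (simp; omega) | simp | omega), if_pos (by first | (simp; omega) | simp | omega)]

lemma lm_lm (i : Idx) : (lm m c i).bind (lm m c) = none := by
  cases i with
  | inr u => rfl
  | inl w =>
    simp only [lm]
    split_ifs with h1 h2 h3
    · rfl
    · simp [lm]
    · rfl
    · rfl

lemma iter_comm (hm : 1 ≤ m) (i : Idx) :
    (tstep m 0 1)^[m] (some i) = (tstep m 1 0)^[m] (some i) := by
  obtain ⟨n, rfl⟩ : ∃ n, m = n + 1 := ⟨m - 1, by omega⟩
  have h01 : (0 : Fin 2) ≠ 1 := by decide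
  have h10 : (1 : Fin 2) ≠ 0 := by decide
  cases i with
  | inr u => rw [iter_socle, iter_socle]
  | inl w =>
    cases w with
    | nil =>
      rw [iter_exact h01 n [] (by simp) (by simp),
        iter_exact h10 n [] (by simp) (by simp)]
    | cons e w' =>
      rw [iter_kill h01 n _ (by first | (simp; omega) | simp | omega), iter_kill h10 n _ (by first | (simp; omega) | simp | omega)]

lemma iter_after_letter (hm : 1 ≤ m) (hcd : c ≠ d) (i : Idx) :
    (tstep m c d)^[m] (lm m c i) = none := by
  obtain ⟨n, rfl⟩ : ∃ n, m = n + 1 := ⟨m - 1, by omega⟩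
  cases i with
  | inr u => exact iter_none _
  | inl w =>
    simp only [lm]
    split_ifs with h1 h2 h3
    · exact iter_none _
    · exact iter_kill hcd n _ (by first | (simp; omega) | simp | omega)
    · exact iter_socle _
    · exact iter_none _

section Rep

variable (k : Type*) [Field k]

noncomputable def op (g : Idx → Option Idx) : (Idx →₀ k) →ₗ[k] (Idx →₀ k) :=
  Finsupp.lsum k fun i => match g i with
    | none => 0
    | some j => Finsupp.lsingle j

noncomputable def esingle (o : Option Idx) (x : k) : Idx →₀ k := o.elim 0 (fun i => Finsupp.single i x)

@[simp] lemma esingle_some (i : Idx) (x : k) :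
    esingle k (some i) x = Finsupp.single i x := rfl

@[simp] lemma esingle_none (x : k) : esingle k none x = 0 := rfl

lemma op_single (g : Idx → Option Idx) (i : Idx) (x : k) :
    op k g (Finsupp.single i x) = esingle k (g i) x := by
  rw [op, Finsupp.lsum_single]
  cases h : g i <;> simp [h, esingle]

lemma op_esingle (g : Idx → Option Idx) (o : Option Idx) (x : k) :
    op k g (esingle k o x) = esingle k (o.bind g) x := by
  cases o <;> simp [op_single]

lemma mul_pow_esingle (g₂ g₁ : Idx → Option Idx) (j : ℕ) (o : Option Idx) (x : k) :
    ((op k g₂ * op k g₁) ^ j) (esingle k o x)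
      = esingle k ((fun o' => (o'.bind g₁).bind g₂)^[j] o) x := by
  induction j with
  | zero => simp
  | succ j ih =>
    rw [pow_succ', Module.End.mul_apply, ih, Module.End.mul_apply, op_esingle, op_esingle,
      Function.iterate_succ_apply']

variable (m : ℕ)

noncomputable def rep : FreeAlgebra k (Fin 2) →ₐ[k] Module.End k (Idx →₀ k) :=
  FreeAlgebra.lift k fun c => op k (lm m c)

@[simp] lemma rep_ι (c : Fin 2) : rep k m (ι k c) = op k (lm m c) :=
  FreeAlgebra.lift_ι_apply _ _

lemma pow_tstep (c d : Fin 2) (j : ℕ) (o : Option Idx) (x : k) :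
    ((op k (lm m c) * op k (lm m d)) ^ j) (esingle k o x)
      = esingle k ((tstep m c d)^[j] o) x :=
  mul_pow_esingle k _ _ j o x

theorem rep_rel (hm : 1 ≤ m) : ∀ ⦃x y⦄, TorusRel k m x y → rep k m x = rep k m y := by
  intro x y h
  have h01 : (0 : Fin 2) ≠ 1 := by decide
  have h10 : (1 : Fin 2) ≠ 0 := by decide
  cases h with
  | asq =>
    rw [map_mul, map_zero, rep_ι]
    refine Finsupp.lhom_ext fun i x => ?_
    rw [Module.End.mul_apply, op_single, op_esingle, lm_lm, esingle_none, LinearMap.zero_apply]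
  | bsq =>
    rw [map_mul, map_zero, rep_ι]
    refine Finsupp.lhom_ext fun i x => ?_
    rw [Module.End.mul_apply, op_single, op_esingle, lm_lm, esingle_none, LinearMap.zero_apply]
  | comm =>
    rw [map_pow, map_pow, map_mul, map_mul, rep_ι, rep_ι]
    refine Finsupp.lhom_ext fun i x => ?_
    rw [← esingle_some, pow_tstep, pow_tstep, iter_comm hm]
  | soca =>
    rw [map_mul, map_pow, map_mul, map_zero, rep_ι, rep_ι]
    refine Finsupp.lhom_ext fun i x => ?_
    rw [Module.End.mul_apply, op_single, pow_tstep, iter_after_letter hm h01, esingle_none,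
      LinearMap.zero_apply]
  | socb =>
    rw [map_mul, map_pow, map_mul, map_zero, rep_ι, rep_ι]
    refine Finsupp.lhom_ext fun i x => ?_
    rw [Module.End.mul_apply, op_single, pow_tstep, iter_after_letter hm h10, esingle_none,
      LinearMap.zero_apply]

end Rep

end TorusAux
namespace TorusAux

section Quot

variable (k : Type*) [Field k] (m : ℕ)

noncomputable def gen (c : Fin 2) : RingQuot (TorusRel k m) :=
  RingQuot.mkAlgHom k (TorusRel k m) (ι k c)

def oth (c : Fin 2) : Fin 2 := 1 - c

@[simp] lemma oth_zero : oth 0 = 1 := rfl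
@[simp] lemma oth_one : oth 1 = 0 := rfl

lemma oth_ne (c : Fin 2) : oth c ≠ c := by fin_cases c <;> decide

@[simp] lemma oth_oth (c : Fin 2) : oth (oth c) = c := by fin_cases c <;> rfl

lemma eq_oth_of_ne {c d : Fin 2} (h : c ≠ d) : d = oth c := by
  revert h; fin_cases c <;> fin_cases d <;> decide

noncomputable def wrd : ℕ → Fin 2 → RingQuot (TorusRel k m)
  | 0, _ => 1
  | l + 1, c => gen k m c * wrd l (oth c)

lemma gen_sq (c : Fin 2) : gen k m c * gen k m c = 0 := by
  fin_cases c
  · simpa [gen] using RingQuot.mkAlgHom_rel k (TorusRel.asq (k := k) (m := m))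
  · simpa [gen] using RingQuot.mkAlgHom_rel k (TorusRel.bsq (k := k) (m := m))

lemma comm_rel : (gen k m 0 * gen k m 1) ^ m = (gen k m 1 * gen k m 0) ^ m := by
  simpa [gen] using RingQuot.mkAlgHom_rel k (TorusRel.comm (k := k) (m := m))

lemma soca_rel : (gen k m 0 * gen k m 1) ^ m * gen k m 0 = 0 := by
  simpa [gen] using RingQuot.mkAlgHom_rel k (TorusRel.soca (k := k) (m := m))

lemma socb_rel : (gen k m 1 * gen k m 0) ^ m * gen k m 1 = 0 := by
  simpa [gen] using RingQuot.mkAlgHom_rel k (TorusRel.socb (k := k) (m := m))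

lemma wrd_pair (c : Fin 2) : ∀ i : ℕ, wrd k m (2 * i) c = (gen k m c * gen k m (oth c)) ^ i := by
  intro i
  induction i with
  | zero => simp [wrd]
  | succ i ih =>
    have h : 2 * (i + 1) = (2 * i) + 1 + 1 := by ring
    rw [h]
    simp only [wrd, oth_oth, ih, pow_succ', mul_assoc]

lemma wrd_shift (c : Fin 2) :
    ∀ i : ℕ, gen k m c * wrd k m (2 * i) (oth c) = wrd k m (2 * i) c * gen k m c := by
  intro i
  induction i with
  | zero => simp [wrd]
  | succ i ih =>
    have h : 2 * (i + 1) = (2 * i) + 1 + 1 := by ring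
    rw [h]
    simp only [wrd, oth_oth]
    rw [ih]
    simp only [mul_assoc]

lemma wrd_top (c : Fin 2) : wrd k m (2 * m) c = wrd k m (2 * m) 0 := by
  fin_cases c
  · rfl
  · rw [wrd_pair, wrd_pair]
    simp only [oth_one, oth_zero]
    exact (comm_rel k m).symm

abbrev Jx (m : ℕ) := Unit ⊕ ((Fin 2 × Fin (2 * m - 1)) ⊕ Unit)

noncomputable def bas : Jx m → RingQuot (TorusRel k m)
  | .inl _ => 1
  | .inr (.inl (c, l)) => wrd k m (l.1 + 1) c
  | .inr (.inr _) => wrd k m (2 * m) 0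

lemma mul_bas_mem (hm : 1 ≤ m) (c : Fin 2) (j : Jx m) :
    gen k m c * bas k m j ∈ Submodule.span k (Set.range (bas k m)) := by
  have hb : ∀ j', bas k m j' ∈ Submodule.span k (Set.range (bas k m)) :=
    fun j' => Submodule.subset_span ⟨j', rfl⟩
  match j with
  | .inl _ =>
    have : gen k m c * bas k m (.inl ()) = bas k m (.inr (.inl (c, ⟨0, by omega⟩))) := by
      simp [bas, wrd]
    rw [this]; exact hb _
  | .inr (.inl (d, l)) =>
    by_cases hcd : c = d
    · subst hcd
      have : gen k m c * bas k m (.inr (.inl (c, l))) = 0 := by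
        simp only [bas, wrd, ← mul_assoc, gen_sq, zero_mul]
      rw [this]; exact Submodule.zero_mem _
    · obtain rfl := eq_oth_of_ne hcd
      have hw : gen k m c * bas k m (.inr (.inl (oth c, l))) = wrd k m (l.1 + 2) c := by
        simp only [bas, wrd, oth_oth]
      rw [hw]
      by_cases h2 : l.1 + 2 ≤ 2 * m - 1
      · have : wrd k m (l.1 + 2) c = bas k m (.inr (.inl (c, ⟨l.1 + 1, by omega⟩))) := rfl
        rw [this]; exact hb _
      · have hl : l.1 + 2 = 2 * m := by have := l.2; omega
        rw [hl, wrd_top]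
        exact hb (.inr (.inr ()))
  | .inr (.inr u) =>
    cases u
    rcases (by omega : c = 0 ∨ c = 1) with rfl | rfl
    · obtain ⟨l, hl⟩ : ∃ l, 2 * m = l + 1 := ⟨2 * m - 1, by omega⟩
      have : gen k m 0 * bas k m (.inr (.inr ())) = 0 := by
        simp only [bas, hl, wrd, oth_zero, ← mul_assoc, gen_sq, zero_mul]
      rw [this]; exact Submodule.zero_mem _
    · have h1 : gen k m 1 * bas k m (.inr (.inr ())) = wrd k m (2 * m) 1 * gen k m 1 := by
        have := wrd_shift k m 1 m
        simpa [bas] using this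
      have h2 : wrd k m (2 * m) 1 * gen k m 1 = 0 := by
        rw [wrd_pair]; simpa using socb_rel k m
      rw [h1, h2]; exact Submodule.zero_mem _

lemma span_bas (hm : 1 ≤ m) : Submodule.span k (Set.range (bas k m)) = ⊤ := by
  set S := Submodule.span k (Set.range (bas k m)) with hS
  have hb : ∀ j', bas k m j' ∈ S := fun j' => Submodule.subset_span ⟨j', rfl⟩
  have hone : (1 : RingQuot (TorusRel k m)) ∈ S := hb (.inl ())
  have hmul : ∀ (c : Fin 2) (x : RingQuot (TorusRel k m)), x ∈ S → gen k m c * x ∈ S := by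
    intro c x hx
    induction hx using Submodule.span_induction with
    | mem x hx => obtain ⟨j, rfl⟩ := hx; exact mul_bas_mem k m hm c j
    | zero => simpa using Submodule.zero_mem S
    | add x y _ _ hx hy => rw [mul_add]; exact Submodule.add_mem S hx hy
    | smul a x _ hx => rw [mul_smul_comm]; exact Submodule.smul_mem S a hx
  have key : ∀ w : FreeMonoid (Fin 2),
      RingQuot.mkAlgHom k (TorusRel k m)
        ((equivMonoidAlgebraFreeMonoid (R := k) (X := Fin 2)).symm
          (MonoidAlgebra.single w 1)) ∈ S := by
    intro w
    induction w using FreeMonoid.recOn with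
    | one =>
      have : (MonoidAlgebra.single (1 : FreeMonoid (Fin 2)) (1 : k))
          = (1 : MonoidAlgebra k (FreeMonoid (Fin 2))) := rfl
      rw [this, map_one, map_one]; exact hone
    | of_mul x xs ih =>
      have hsplit : (MonoidAlgebra.single (FreeMonoid.of x * xs) (1 : k))
          = MonoidAlgebra.single (FreeMonoid.of x) (1 : k) * MonoidAlgebra.single xs 1 := by
        rw [MonoidAlgebra.single_mul_single, one_mul]
      have hι : (equivMonoidAlgebraFreeMonoid (R := k) (X := Fin 2)).symm
          (MonoidAlgebra.single (FreeMonoid.of x) (1 : k)) = ι k x := by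
        rw [AlgEquiv.symm_apply_eq]
        simp [equivMonoidAlgebraFreeMonoid]
      rw [hsplit, map_mul, hι, map_mul]
      exact hmul x _ ih
  rw [eq_top_iff]
  rintro z -
  obtain ⟨y, rfl⟩ := RingQuot.mkAlgHom_surjective k (TorusRel k m) z
  have hy : y ∈ Submodule.span k (Set.range (FreeAlgebra.basisFreeMonoid k (Fin 2))) := by
    rw [Module.Basis.span_eq]; trivial
  induction hy using Submodule.span_induction with
  | mem v hv =>
    obtain ⟨w, rfl⟩ := hv
    have : (FreeAlgebra.basisFreeMonoid k (Fin 2)) w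
        = (equivMonoidAlgebraFreeMonoid (R := k) (X := Fin 2)).symm
            (MonoidAlgebra.single w 1) := by
      rw [FreeAlgebra.basisFreeMonoid, Module.Basis.map_apply,
        congrFun (Finsupp.coe_basisSingleOne (R := k) (ι := FreeMonoid (Fin 2))) w]
      rfl
    rw [this]; exact key w
  | zero => rw [map_zero]; exact Submodule.zero_mem S
  | add x y _ _ hx hy => rw [map_add]; exact Submodule.add_mem S hx hy
  | smul a x _ hx => rw [map_smul]; exact Submodule.smul_mem S a hx

end Quot

end TorusAux
namespace TorusAux

section Indep

variable (k : Type*) [Field k] (m : ℕ)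

def altw : ℕ → Fin 2 → List (Fin 2)
  | 0, _ => []
  | l + 1, c => c :: altw l (oth c)

@[simp] lemma altw_length : ∀ (l : ℕ) (c : Fin 2), (altw l c).length = l
  | 0, _ => rfl
  | l + 1, c => by simp [altw, altw_length l]

lemma altw_head (l : ℕ) (c : Fin 2) : (altw (l + 1) c).head? = some c := rfl

lemma altw_head_ne (l : ℕ) (c : Fin 2) : ¬((altw l (oth c)).head? = some c) := by
  cases l with
  | zero => simp [altw]
  | succ l => rw [altw_head]; simpa using oth_ne c

def ww : Jx m → Idx
  | .inl _ => .inl []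
  | .inr (.inl (c, l)) => .inl (altw (l.1 + 1) c)
  | .inr (.inr _) => .inr ()

lemma ww_inj : Function.Injective (ww m) := by
  intro j j' h
  match j, j' with
  | .inl (), .inl () => rfl
  | .inl (), .inr (.inl (c, l)) =>
    exfalso
    simp only [ww, Sum.inl.injEq] at h
    have := congrArg List.length h
    simp at this
  | .inr (.inl (c, l)), .inl () =>
    exfalso
    simp only [ww, Sum.inl.injEq] at h
    have := congrArg List.length h
    simp at this
  | .inl (), .inr (.inr ()) => exact absurd h (by simp [ww])
  | .inr (.inr ()), .inl () => exact absurd h (by simp [ww])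
  | .inr (.inl (c, l)), .inr (.inr ()) => exact absurd h (by simp [ww])
  | .inr (.inr ()), .inr (.inl (c, l)) => exact absurd h (by simp [ww])
  | .inr (.inr ()), .inr (.inr ()) => rfl
  | .inr (.inl (c, l)), .inr (.inl (c', l')) =>
    simp only [ww, Sum.inr.injEq, Sum.inl.injEq] at h
    have hlen := congrArg List.length h
    simp only [altw_length] at hlen
    have hl : l = l' := by ext; omega
    subst hl
    have hc : c = c' := by
      have := congrArg List.head? h
      rw [altw_head, altw_head] at this
      exact Option.some_injective _ this
    subst hc
    rfl

noncomputable def psi (hm : 1 ≤ m) :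
    RingQuot (TorusRel k m) →ₐ[k] Module.End k (Idx →₀ k) :=
  RingQuot.liftAlgHom k ⟨rep k m, rep_rel k m hm⟩

@[simp] lemma psi_gen (hm : 1 ≤ m) (c : Fin 2) :
    psi k m hm (gen k m c) = op k (lm m c) := by
  rw [gen, psi, RingQuot.liftAlgHom_mkAlgHom_apply, rep_ι]

noncomputable def e0 : Idx →₀ k := Finsupp.single (Sum.inl ([] : List (Fin 2))) 1

lemma psi_wrd (hm : 1 ≤ m) :
    ∀ l : ℕ, l < 2 * m → ∀ c : Fin 2,
      psi k m hm (wrd k m l c) (e0 k) = Finsupp.single (Sum.inl (altw l c)) (1 : k) := by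
  intro l
  induction l with
  | zero => intro _ c; simp [wrd, altw, e0]
  | succ l ih =>
    intro hl c
    simp only [wrd]
    rw [map_mul, Module.End.mul_apply, ih (by omega) (oth c), psi_gen, op_single]
    simp only [lm]
    rw [if_neg (altw_head_ne l c), if_pos (by rw [altw_length]; omega)]
    rfl

lemma psi_wrd_top (hm : 1 ≤ m) (c : Fin 2) :
    psi k m hm (wrd k m (2 * m) c) (e0 k) = Finsupp.single (Sum.inr ()) (1 : k) := by
  obtain ⟨l, hl⟩ : ∃ l, 2 * m = l + 1 := ⟨2 * m - 1, by omega⟩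
  rw [hl]
  simp only [wrd]
  rw [map_mul, Module.End.mul_apply, psi_wrd k m hm l (by omega), psi_gen, op_single]
  simp only [lm]
  rw [if_neg (altw_head_ne l c), if_neg (by rw [altw_length]; omega),
    if_pos (by rw [altw_length]; omega)]
  rfl

lemma bas_indep (hm : 1 ≤ m) : LinearIndependent k (bas k m) := by
  apply LinearIndependent.of_comp
    ((LinearMap.applyₗ (e0 k)).comp (psi k m hm).toLinearMap)
  have hcomp : (⇑((LinearMap.applyₗ (e0 k)).comp (psi k m hm).toLinearMap) ∘ bas k m)
      = fun j => Finsupp.single (ww m j) (1 : k) := by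
    funext j
    match j with
    | .inl () =>
      show psi k m hm (1 : RingQuot (TorusRel k m)) (e0 k)
          = Finsupp.single (Sum.inl []) 1
      rw [map_one, Module.End.one_apply]; rfl
    | .inr (.inl (c, l)) =>
      show psi k m hm (wrd k m (l.1 + 1) c) (e0 k)
          = Finsupp.single (Sum.inl (altw (l.1 + 1) c)) 1
      exact psi_wrd k m hm (l.1 + 1) (by have := l.2; omega) c
    | .inr (.inr ()) =>
      show psi k m hm (wrd k m (2 * m) 0) (e0 k)
          = Finsupp.single (Sum.inr ()) 1
      exact psi_wrd_top k m hm 0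
  rw [hcomp]
  have h2 : (fun j => Finsupp.single (ww m j) (1 : k))
      = (⇑(Finsupp.basisSingleOne (R := k) (ι := Idx)) ∘ ww m) := by
    funext j
    simp [Finsupp.coe_basisSingleOne]
  rw [h2]
  exact Finsupp.basisSingleOne.linearIndependent.comp (ww m) (ww_inj m)

noncomputable def basBasis (hm : 1 ≤ m) : Module.Basis (Jx m) k (RingQuot (TorusRel k m)) :=
  Module.Basis.mk (bas_indep k m hm) (span_bas k m hm).ge

end Indep

end TorusAux



/-- Specialization of the rank formula `dim B = Σ_v m_v d_v²` for Brauer graph algebras to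
the Brauer graph with a single vertex of multiplicity `m` and one loop edge (valency
`d = 2`): the algebra has dimension `m ⋅ 2²`. -/
theorem stmt_7 (k : Type*) [Field k] (m : ℕ) (hm : 1 ≤ m) :
    Module.finrank k (RingQuot (TorusRel k m)) = m * 2 ^ 2 := by
  rw [Module.finrank_eq_card_basis (TorusAux.basBasis k m hm)]
  have hcard : Fintype.card (TorusAux.Jx m) = 1 + (2 * (2 * m - 1) + 1) := by
    simp [TorusAux.Jx]
  rw [hcard]
  have h4 : m * 2 ^ 2 = 4 * m := by ring
  rw [h4]
  omega
end
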